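/- arXiv:2011.13670 — 5 statements merged into one kernel-verified Lean document; each statement's English description precedes it below -/
import Mathlib

section
/- If a sequence ξ : ℕ → ℝⁿ satisfies the exponential turnpike bound ‖ξ(t) − ξ̄‖ ≤ C(ρ^t + ρ^{T−t}) for all t ∈ {0,…,T−1}, with C > 0 and ρ ∈ [0,1), then for every ε > 0 the number of times t ∈ {0,…,T−1} with ‖ξ(t) − ξ̄‖ > ε is bounded by a quantity depending only on ε, C, ρ (independent of T). -/
/-- exponential turnpike bound implies a cardinality bound on the bad set,
with the bounding function `ν` independent of the horizon `T`. -/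
theorem exp_turnpike_implies_cardinality_turnpike
    (n : ℕ) (C ρ : ℝ) (hC : 0 < C) (hρ0 : 0 ≤ ρ) (hρ1 : ρ < 1)
    (ξbar : EuclideanSpace ℝ (Fin n)) :
    ∃ ν : ℝ → ℕ, ∀ (T : ℕ) (ξ : ℕ → EuclideanSpace ℝ (Fin n)),
      (∀ t < T, ‖ξ t - ξbar‖ ≤ C * (ρ ^ t + ρ ^ (T - t))) →
      ∀ ε > 0, ({t : ℕ | t < T ∧ ε < ‖ξ t - ξbar‖}).ncard ≤ ν ε := by
  refine ⟨fun ε => 2 * sInf {N | ρ ^ N < ε / (2 * C)}, ?_⟩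
  intro T ξ hb ε hε
  set N := sInf {N | ρ ^ N < ε / (2 * C)} with hNdef
  have h2 : 0 < ε / (2 * C) := by positivity
  have hne : {N | ρ ^ N < ε / (2 * C)}.Nonempty := exists_pow_lt_of_lt_one h2 hρ1
  have hNmem : ρ ^ N < ε / (2 * C) := Nat.sInf_mem hne
  have hsub : {t : ℕ | t < T ∧ ε < ‖ξ t - ξbar‖} ⊆
      ↑(Finset.range N ∪ Finset.Ico (T - N) T) := by
    intro t ht
    obtain ⟨htT, hlt⟩ := ht
    simp only [Finset.coe_union, Finset.coe_range, Finset.coe_Ico, Set.mem_union,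
      Set.mem_Iio, Set.mem_Ico]
    by_contra hcon
    push_neg at hcon
    obtain ⟨h1, h2'⟩ := hcon
    have hTt : N ≤ T - t := by
      have := h2' ; omega
    have hp1 : ρ ^ t ≤ ρ ^ N := pow_le_pow_of_le_one hρ0 hρ1.le h1
    have hp2 : ρ ^ (T - t) ≤ ρ ^ N := pow_le_pow_of_le_one hρ0 hρ1.le hTt
    have hbt := hb t htT
    have : ‖ξ t - ξbar‖ < ε := by
      calc ‖ξ t - ξbar‖ ≤ C * (ρ ^ t + ρ ^ (T - t)) := hbt
        _ ≤ C * (ρ ^ N + ρ ^ N) := by nlinarith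
        _ = 2 * C * ρ ^ N := by ring
        _ < 2 * C * (ε / (2 * C)) := by
            apply mul_lt_mul_of_pos_left hNmem; positivity
        _ = ε := by field_simp
    linarith
  calc ({t : ℕ | t < T ∧ ε < ‖ξ t - ξbar‖}).ncard
      ≤ (↑(Finset.range N ∪ Finset.Ico (T - N) T) : Set ℕ).ncard :=
        Set.ncard_le_ncard hsub (Finset.range N ∪ Finset.Ico (T - N) T).finite_toSet
    _ = (Finset.range N ∪ Finset.Ico (T - N) T).card := Set.ncard_coe_finset _
    _ ≤ (Finset.range N).card + (Finset.Ico (T - N) T).card := Finset.card_union_le _ _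
    _ ≤ 2 * N := by
        rw [Finset.card_range, Nat.card_Ico]; omega
end

section
/- If a measurable function ξ : [0,T] → ℝⁿ satisfies ‖ξ(t) − ξ̄‖ ≤ C(e^{−γt} + e^{−γ(T−t)}) for all t ∈ [0,T] with C > 0 and γ > 0, then for every ε > 0 the Lebesgue measure of the set Θ_T(ε) = {t ∈ [0,T] : ‖ξ(t) − ξ̄‖ > ε} is at most max{0, −(2/γ) ln(ε/(2C))}, a bound independent of T. -/
open MeasureTheory

/-- continuous-time exponential turnpike implies the measure turnpike
property with the explicit bound `max 0 (-(2/γ) ln(ε/(2C)))`, independent of `T`. -/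
theorem exp_turnpike_implies_measure_turnpike
    (n : ℕ) (C γ T : ℝ) (hC : 0 < C) (hγ : 0 < γ) (hT : 0 < T)
    (ξ : ℝ → EuclideanSpace ℝ (Fin n)) (ξbar : EuclideanSpace ℝ (Fin n))
    (hξ : ∀ t ∈ Set.Icc (0:ℝ) T,
      ‖ξ t - ξbar‖ ≤ C * (Real.exp (-γ * t) + Real.exp (-γ * (T - t)))) :
    ∀ ε > 0,
      volume {t : ℝ | t ∈ Set.Icc (0:ℝ) T ∧ ε < ‖ξ t - ξbar‖}
        ≤ ENNReal.ofReal (max 0 (-(2/γ) * Real.log (ε / (2*C)))) := by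
  intro ε hε
  have hεC : 0 < ε / (2*C) := by positivity
  set τ : ℝ := -(1/γ) * Real.log (ε / (2*C)) with hτdef
  set τ' : ℝ := max 0 τ with hτ'def
  have hτ'0 : 0 ≤ τ' := le_max_left _ _
  have key : ∀ t : ℝ, τ' < t → Real.exp (-γ * t) < ε / (2*C) := by
    intro t ht
    have hτt : τ < t := lt_of_le_of_lt (le_max_right _ _) ht
    have h1 : -γ * t < -γ * τ := by
      have := mul_lt_mul_of_neg_left hτt (neg_neg_of_pos hγ)
      linarith
    have h2 : -γ * τ = Real.log (ε / (2*C)) := by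
      rw [hτdef, ← mul_assoc, neg_mul_neg, mul_one_div_cancel hγ.ne', one_mul]
    calc Real.exp (-γ * t) < Real.exp (Real.log (ε / (2*C))) := by
          exact Real.exp_lt_exp.mpr (h2 ▸ h1)
      _ = ε / (2*C) := Real.exp_log hεC
  have hsub : {t : ℝ | t ∈ Set.Icc (0:ℝ) T ∧ ε < ‖ξ t - ξbar‖} ⊆
      Set.Icc (0:ℝ) τ' ∪ Set.Icc (T - τ') T := by
    rintro t ⟨⟨ht0, htT⟩, hεt⟩
    by_contra hc
    simp only [Set.mem_union, Set.mem_Icc, not_or, not_and] at hc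
    obtain ⟨h1, h2⟩ := hc
    have ht1 : τ' < t := lt_of_not_ge (h1 ht0)
    have ht2 : t < T - τ' := by
      by_contra h
      push_neg at h
      exact absurd htT (h2 h)
    have e1 : Real.exp (-γ * t) < ε / (2*C) := key t ht1
    have e2 : Real.exp (-γ * (T - t)) < ε / (2*C) := key (T - t) (by linarith)
    have hb := hξ t ⟨ht0, htT⟩
    have : C * (Real.exp (-γ * t) + Real.exp (-γ * (T - t))) < ε := by
      have h2C : C * (ε / (2*C) + ε / (2*C)) = ε := by field_simp; ring
      calc C * (Real.exp (-γ * t) + Real.exp (-γ * (T - t)))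
          < C * (ε / (2*C) + ε / (2*C)) := by
            apply mul_lt_mul_of_pos_left (by linarith) hC
        _ = ε := h2C
    linarith
  have hmeas : volume {t : ℝ | t ∈ Set.Icc (0:ℝ) T ∧ ε < ‖ξ t - ξbar‖}
      ≤ ENNReal.ofReal τ' + ENNReal.ofReal τ' := by
    calc volume {t : ℝ | t ∈ Set.Icc (0:ℝ) T ∧ ε < ‖ξ t - ξbar‖}
        ≤ volume (Set.Icc (0:ℝ) τ' ∪ Set.Icc (T - τ') T) := measure_mono hsub
      _ ≤ volume (Set.Icc (0:ℝ) τ') + volume (Set.Icc (T - τ') T) :=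
          measure_union_le _ _
      _ = ENNReal.ofReal τ' + ENNReal.ofReal τ' := by
          rw [Real.volume_Icc, Real.volume_Icc]
          congr 1 <;> ring_nf
  have hfin : ENNReal.ofReal τ' + ENNReal.ofReal τ' = ENNReal.ofReal (2 * τ') := by
    rw [← ENNReal.ofReal_add hτ'0 hτ'0]; congr 1; ring
  have hmax : max 0 (-(2/γ) * Real.log (ε / (2*C))) = 2 * τ' := by
    have h2 : -(2/γ) * Real.log (ε / (2*C)) = 2 * τ := by rw [hτdef]; ring
    rw [h2, hτ'def]
    rcases le_total τ 0 with h | h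
    · rw [max_eq_left h, max_eq_left (by linarith)]; ring
    · rw [max_eq_right h, max_eq_right (by linarith)]
  rw [hmax]
  calc volume {t : ℝ | t ∈ Set.Icc (0:ℝ) T ∧ ε < ‖ξ t - ξbar‖}
      ≤ ENNReal.ofReal τ' + ENNReal.ofReal τ' := hmeas
    _ = ENNReal.ofReal (2 * τ') := hfin
end

section
/- Consider a discrete-time system x(t+1) = f(x(t),u(t)) with running cost ℓ that is strictly dissipative: there exist a storage function S : X → ℝ bounded below and α ∈ 𝒦∞ with S(f(x,u)) − S(x) ≤ ℓ(x,u) − ℓ(x̄,ū) − α(‖x − x̄‖) for all admissible (x,u). Suppose furthermore that there exists C̃ independent of T such that the optimal value satisfies V_T(x₀) ≤ C̃ + T·ℓ(x̄,ū). Then the optimal trajectories have the cardinality state turnpike property at x̄: for each ε > 0 there is ν(ε) < ∞, independent of T, bounding the number of time instants t ∈ {0,…,T−1} with ‖x*(t) − x̄‖ > ε. -/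
/-- strict dissipativity plus a `T`-uniform upper bound on the optimal value
implies the cardinality state-turnpike property at `x̄`, with bound `ν` independent of `T`. -/
theorem strict_dissipativity_implies_cardinality_turnpike
    {X U : Type*} [NormedAddCommGroup X]
    (f : X → U → X) (ℓ : X → U → ℝ) (Z : Set (X × U))
    (xbar : X) (ubar : U) (hequi : f xbar ubar = xbar)
    (S : X → ℝ) (m : ℝ) (hSlb : ∀ x, m ≤ S x)
    (α : ℝ → ℝ) (hα0 : α 0 = 0) (hαmono : StrictMonoOn α (Set.Ici 0))
    (hαcont : Continuous α) (hαunbdd : ∀ M : ℝ, ∃ r : ℝ, 0 ≤ r ∧ M < α r)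
    (hdiss : ∀ z ∈ Z, S (f z.1 z.2) - S z.1 ≤ ℓ z.1 z.2 - ℓ xbar ubar - α ‖z.1 - xbar‖)
    (x₀ : X) (Ctil : ℝ) :
    ∃ ν : ℝ → ℝ, ∀ (T : ℕ) (x : ℕ → X) (u : ℕ → U),
      x 0 = x₀ →
      (∀ t < T, x (t+1) = f (x t) (u t) ∧ (x t, u t) ∈ Z) →
      (∑ t ∈ Finset.range T, ℓ (x t) (u t)) ≤ Ctil + T * ℓ xbar ubar →
      ∀ ε > 0, (({t : ℕ | t < T ∧ ε < ‖x t - xbar‖}).ncard : ℝ) ≤ ν ε := by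
  refine ⟨fun ε => (Ctil + S x₀ - m) / α ε, ?_⟩
  intro T x u hx0 hadm hcost ε hε
  have hαε : 0 < α ε := by
    have := hαmono (Set.self_mem_Ici) (Set.mem_Ici.mpr hε.le) hε
    rwa [hα0] at this
  have hαnn : ∀ r : ℝ, 0 ≤ r → 0 ≤ α r := by
    intro r hr
    rcases eq_or_lt_of_le hr with h | h
    · rw [← h, hα0]
    · have := hαmono (Set.self_mem_Ici) (Set.mem_Ici.mpr hr) h
      rw [hα0] at this; exact this.le
  -- telescoping dissipation inequality
  have key : ∀ N ≤ T, S (x N) - S (x 0) ≤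
      ∑ t ∈ Finset.range N, (ℓ (x t) (u t) - ℓ xbar ubar - α ‖x t - xbar‖) := by
    intro N hN
    induction N with
    | zero => simp
    | succ n ih =>
      have hn : n < T := hN
      obtain ⟨hstep, hmem⟩ := hadm n hn
      have hd := hdiss (x n, u n) hmem
      rw [Finset.sum_range_succ]
      have := ih (le_of_lt hn)
      rw [hstep]
      linarith
  have hsum := key T le_rfl
  rw [Finset.sum_sub_distrib, Finset.sum_sub_distrib, Finset.sum_const,
    Finset.card_range, nsmul_eq_mul] at hsum
  have htotal : ∑ t ∈ Finset.range T, α ‖x t - xbar‖ ≤ Ctil + S x₀ - m := by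
    have := hSlb (x T)
    rw [hx0] at hsum
    linarith
  set B := (Finset.range T).filter (fun t => ε < ‖x t - xbar‖) with hB
  have hset : {t : ℕ | t < T ∧ ε < ‖x t - xbar‖} = ↑B := by
    ext t; simp [hB]
  rw [hset, Set.ncard_coe_finset]
  rw [le_div_iff₀ hαε]
  calc (B.card : ℝ) * α ε = ∑ _t ∈ B, α ε := by
        rw [Finset.sum_const, nsmul_eq_mul]
    _ ≤ ∑ t ∈ B, α ‖x t - xbar‖ := by
        refine Finset.sum_le_sum fun t ht => ?_
        have h1 : ε < ‖x t - xbar‖ := (Finset.mem_filter.mp ht).2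
        exact (hαmono (Set.mem_Ici.mpr hε.le)
          (Set.mem_Ici.mpr (norm_nonneg _)) h1).le
    _ ≤ ∑ t ∈ Finset.range T, α ‖x t - xbar‖ := by
        refine Finset.sum_le_sum_of_subset_of_nonneg (Finset.filter_subset _ _)
          fun t ht _ => hαnn _ (norm_nonneg _)
    _ ≤ Ctil + S x₀ - m := htotal
end

section
/- Under the strict dissipativity and bounded optimal value assumptions of the previous setting, one can take ν(ε) = (C̃ + S(x₀) − m)/α(ε), where m is a lower bound for S: if an optimal trajectory x* for horizon T satisfies ‖x*(t) − x̄‖ > ε for at least K time instants in {0,…,T−1}, then K·α(ε) ≤ C̃ + S(x₀) − m. -/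
/-- quantitative turnpike bound: if an optimal trajectory deviates from `x̄`
by more than `ε` at least `K` times, then `K·α(ε) ≤ C̃ + S(x₀) − m`. -/
theorem quantitative_turnpike_bound
    {X U : Type*} [NormedAddCommGroup X]
    (f : X → U → X) (ℓ : X → U → ℝ) (Z : Set (X × U))
    (xbar : X) (ubar : U) (hequi : f xbar ubar = xbar)
    (S : X → ℝ) (m : ℝ) (hSlb : ∀ x, m ≤ S x)
    (α : ℝ → ℝ) (hα0 : α 0 = 0) (hαmono : StrictMonoOn α (Set.Ici 0))
    (hdiss : ∀ z ∈ Z, S (f z.1 z.2) - S z.1 ≤ ℓ z.1 z.2 - ℓ xbar ubar - α ‖z.1 - xbar‖)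
    (x₀ : X) (Ctil : ℝ) (T : ℕ) (x : ℕ → X) (u : ℕ → U)
    (hx0 : x 0 = x₀)
    (hadm : ∀ t < T, x (t+1) = f (x t) (u t) ∧ (x t, u t) ∈ Z)
    (hcost : (∑ t ∈ Finset.range T, ℓ (x t) (u t)) ≤ Ctil + T * ℓ xbar ubar)
    (ε : ℝ) (hε : 0 < ε) (K : ℕ)
    (hK : K ≤ ({t : ℕ | t < T ∧ ε < ‖x t - xbar‖}).ncard) :
    (K : ℝ) * α ε ≤ Ctil + S x₀ - m := by
  have hαmono' : MonotoneOn α (Set.Ici 0) := hαmono.monotoneOn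
  have hαnn : ∀ r : ℝ, 0 ≤ r → 0 ≤ α r := fun r hr => by
    rw [← hα0]; exact hαmono' (by simp) hr hr
  -- each step inequality
  have hstep : ∀ t < T,
      S (x (t+1)) - S (x t) ≤ ℓ (x t) (u t) - ℓ xbar ubar - α ‖x t - xbar‖ := by
    intro t ht
    obtain ⟨hdyn, hmem⟩ := hadm t ht
    have := hdiss (x t, u t) hmem
    simpa [← hdyn] using this
  -- sum over range T
  have hsum : S (x T) - S (x 0) ≤
      (∑ t ∈ Finset.range T, ℓ (x t) (u t)) - T * ℓ xbar ubar
        - ∑ t ∈ Finset.range T, α ‖x t - xbar‖ := by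
    have := Finset.sum_le_sum (fun t ht => hstep t (Finset.mem_range.mp ht))
    calc S (x T) - S (x 0)
        = ∑ t ∈ Finset.range T, (S (x (t+1)) - S (x t)) := (Finset.sum_range_sub (fun t => S (x t)) T).symm
      _ ≤ ∑ t ∈ Finset.range T, (ℓ (x t) (u t) - ℓ xbar ubar - α ‖x t - xbar‖) := this
      _ = (∑ t ∈ Finset.range T, ℓ (x t) (u t)) - T * ℓ xbar ubar
            - ∑ t ∈ Finset.range T, α ‖x t - xbar‖ := by
          rw [Finset.sum_sub_distrib, Finset.sum_sub_distrib, Finset.sum_const,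
            Finset.card_range, nsmul_eq_mul]
  have halpha : (∑ t ∈ Finset.range T, α ‖x t - xbar‖) ≤ Ctil + S x₀ - m := by
    have h1 : m ≤ S (x T) := hSlb _
    have := hsum
    rw [hx0] at this
    linarith
  -- the bad set as a finset
  set F : Finset ℕ := (Finset.range T).filter (fun t => ε < ‖x t - xbar‖) with hF
  have hset : {t : ℕ | t < T ∧ ε < ‖x t - xbar‖} = ↑F := by
    ext t; simp [hF, Finset.mem_filter]
  rw [hset, Set.ncard_coe_finset] at hK
  have hKF : (K : ℝ) * α ε ≤ ∑ t ∈ F, α ‖x t - xbar‖ := by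
    have hle : ∀ t ∈ F, α ε ≤ α ‖x t - xbar‖ := by
      intro t ht
      rw [hF, Finset.mem_filter] at ht
      exact (hαmono hε.le (le_trans hε.le ht.2.le) ht.2).le
    calc (K : ℝ) * α ε ≤ (F.card : ℝ) * α ε := by
          have := hαnn ε hε.le
          exact mul_le_mul_of_nonneg_right (by exact_mod_cast hK) this
      _ = ∑ _t ∈ F, α ε := by rw [Finset.sum_const, nsmul_eq_mul]
      _ ≤ ∑ t ∈ F, α ‖x t - xbar‖ := Finset.sum_le_sum hle
  have hFsub : ∑ t ∈ F, α ‖x t - xbar‖ ≤ ∑ t ∈ Finset.range T, α ‖x t - xbar‖ :=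
    Finset.sum_le_sum_of_subset_of_nonneg (Finset.filter_subset _ _)
      (fun t _ _ => hαnn _ (norm_nonneg _))
  linarith
end

section
/- Let ξ : [0,∞) → ℝⁿ be uniformly continuous and suppose that for every ε > 0 the set Θ(ε) = {t ≥ 0 : ‖ξ(t) − ξ̄‖ > ε} has finite Lebesgue measure. Then ξ(t) → ξ̄ as t → ∞. -/
open Filter MeasureTheory

/-- uniform continuity plus the infinite-horizon measure turnpike property
forces convergence to the turnpike. -/
theorem measure_turnpike_and_uniform_continuity_implies_convergence
    (n : ℕ) (ξ : ℝ → EuclideanSpace ℝ (Fin n)) (ξbar : EuclideanSpace ℝ (Fin n))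
    (huc : ∀ ε > 0, ∃ δ > 0, ∀ t s : ℝ, 0 ≤ t → 0 ≤ s → |t - s| < δ → ‖ξ t - ξ s‖ < ε)
    (hmeas : ∀ ε > 0, volume {t : ℝ | 0 ≤ t ∧ ε < ‖ξ t - ξbar‖} < ⊤) :
    Tendsto ξ atTop (nhds ξbar) := by
  rw [Metric.tendsto_atTop]
  intro ε hε
  by_contra hcon
  push_neg at hcon
  -- there are arbitrarily large bad times with ‖ξ t - ξbar‖ ≥ ε
  have hbad : ∀ T : ℝ, ∃ t, T ≤ t ∧ 0 ≤ t ∧ ε / 2 < ‖ξ t - ξbar‖ := by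
    intro T
    obtain ⟨t, ht, hd⟩ := hcon (max T 0)
    refine ⟨t, le_trans (le_max_left _ _) ht, le_trans (le_max_right _ _) ht, ?_⟩
    rw [dist_eq_norm] at hd
    linarith
  obtain ⟨δ, hδ, hδε⟩ := huc (ε / 4) (by linarith)
  choose f hf1 hf2 hf3 using hbad
  set t : ℕ → ℝ := fun k => Nat.rec (f 0) (fun _ prev => f (prev + δ)) k with ht
  have ht0 : ∀ k, 0 ≤ t k := by
    intro k; cases k with
    | zero => exact hf2 0
    | succ k => exact hf2 _
  have htstep : ∀ k, t k + δ ≤ t (k + 1) := fun k => hf1 _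
  have htbad : ∀ k, ε / 2 < ‖ξ (t k) - ξbar‖ := by
    intro k; cases k with
    | zero => exact hf3 0
    | succ k => exact hf3 _
  have hmono : ∀ j k : ℕ, j < k → t j + δ ≤ t k := by
    intro j k hjk
    induction k with
    | zero => omega
    | succ k ih =>
      rcases Nat.lt_succ_iff_lt_or_eq.mp hjk with h | h
      · exact le_trans (ih h) (le_trans (by linarith [htstep k]) le_rfl)
      · subst h; exact htstep j
  -- each interval Ico (t k) (t k + δ) is inside the bad set Θ for ε/4
  set Θ : Set ℝ := {s : ℝ | 0 ≤ s ∧ ε / 4 < ‖ξ s - ξbar‖} with hΘ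
  have hsub : ∀ k, Set.Ico (t k) (t k + δ) ⊆ Θ := by
    intro k s hs
    have hs0 : 0 ≤ s := le_trans (ht0 k) hs.1
    have hclose : ‖ξ (t k) - ξ s‖ < ε / 4 := by
      apply hδε _ _ (ht0 k) hs0
      rw [abs_lt]; constructor <;> [linarith [hs.1, hs.2]; linarith [hs.1, hs.2]]
    refine ⟨hs0, ?_⟩
    have := norm_sub_norm_le (ξ (t k) - ξbar) (ξ (t k) - ξ s)
    have heq : ξ (t k) - ξbar - (ξ (t k) - ξ s) = ξ s - ξbar := by abel
    rw [heq] at this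
    have := htbad k
    linarith
  have hdisj : Pairwise (Function.onFun Disjoint fun k => Set.Ico (t k) (t k + δ)) := by
    intro i j hij
    rcases hij.lt_or_gt with h | h
    · exact Set.Ico_disjoint_Ico.mpr
        (le_trans (min_le_left _ _) (le_trans (hmono i j h) (le_max_right _ _)))
    · exact (Set.Ico_disjoint_Ico.mpr
        (le_trans (min_le_left _ _) (le_trans (hmono j i h) (le_max_right _ _)))).symm
  have hunion : volume (⋃ k, Set.Ico (t k) (t k + δ)) = ∑' _ : ℕ, ENNReal.ofReal δ := by
    rw [measure_iUnion hdisj (fun k => measurableSet_Ico)]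
    simp [Real.volume_Ico]
  have htop : volume (⋃ k, Set.Ico (t k) (t k + δ)) = ⊤ := by
    rw [hunion, ENNReal.tsum_const_eq_top_of_ne_zero (ENNReal.ofReal_pos.mpr hδ).ne']
  have hle : volume (⋃ k, Set.Ico (t k) (t k + δ)) ≤ volume Θ :=
    measure_mono (Set.iUnion_subset hsub)
  have := hmeas (ε / 4) (by linarith)
  rw [htop] at hle
  exact this.ne (le_antisymm le_top hle)
end
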